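/- For n ≥ k ≥ 1, the value g(n,1,k), defined as the maximum size of a 1-simplex-free family F of subsets of an n-element set X all of size at most n−k and with some member of size exactly n−k, equals 2^{n-1} − Σ_{j=1}^{k-1} C(n−1, j), and this maximum is attained by the family {A ⊆ X : x ∈ A, |A| ≤ n−k} ∪ {∅} for any fixed x ∈ X. -/

import Mathlib

open Finset

/-- A `d`-simplex: `d+1` sets whose total intersection is empty but such that
the intersection of any `d` of them is nonempty. -/
def IsSimplex {α : Type*} [DecidableEq α] (d : ℕ) (A : Fin (d + 1) → Finset α) : Prop :=
  (⋂ i, (A i : Set α)) = ∅ ∧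
    ∀ j : Fin (d + 1), (⋂ i, ⋂ (_ : i ≠ j), (A i : Set α)).Nonempty

/-- A family is `d`-simplex-free if it contains no `d`-simplex. -/
def SimplexFree {α : Type*} [DecidableEq α] (d : ℕ) (F : Finset (Finset α)) : Prop :=
  ¬ ∃ A : Fin (d + 1) → Finset α, (∀ i, A i ∈ F) ∧ IsSimplex d A

theorem isSimplex_one_iff {α : Type*} [DecidableEq α] {A : Fin 2 → Finset α} :
    IsSimplex 1 A ↔ Disjoint (A 0) (A 1) ∧ (A 0).Nonempty ∧ (A 1).Nonempty := by
  unfold IsSimplex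
  constructor
  · rintro ⟨h1, h2⟩
    refine ⟨?_, ?_, ?_⟩
    · rw [Finset.disjoint_left]
      intro a ha0 ha1
      have : a ∈ (⋂ i, (A i : Set α)) := by
        simp [Set.mem_iInter, Fin.forall_fin_two, ha0, ha1]
      rw [h1] at this; exact this
    · obtain ⟨y, hy⟩ := h2 1
      simp [Set.mem_iInter, Fin.forall_fin_two] at hy
      exact ⟨y, hy⟩
    · obtain ⟨y, hy⟩ := h2 0
      simp [Set.mem_iInter, Fin.forall_fin_two] at hy
      exact ⟨y, hy⟩
  · rintro ⟨hd, ⟨a0, h0⟩, ⟨a1, h1⟩⟩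
    constructor
    · ext y
      simp [Set.mem_iInter, Fin.forall_fin_two]
      intro hy0 hy1
      exact Finset.disjoint_left.mp hd hy0 hy1
    · intro j
      fin_cases j
      · exact ⟨a1, by simp [Set.mem_iInter, Fin.forall_fin_two, h1]⟩
      · exact ⟨a0, by simp [Set.mem_iInter, Fin.forall_fin_two, h0]⟩

theorem count_level {α : Type*} [DecidableEq α] (n : ℕ) (X : Finset α) (hX : X.card = n)
    (x : α) (hx : x ∈ X) (i : ℕ) (hi : 1 ≤ i) :
    (X.powerset.filter (fun A => x ∈ A ∧ A.card = i)).card = (n-1).choose (i-1) := by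
  have : (X.powerset.filter (fun A => x ∈ A ∧ A.card = i)).card
      = ((X.erase x).powersetCard (i-1)).card := by
    apply Finset.card_bij (fun A _ => A.erase x)
    · intro A hA
      simp only [mem_filter, mem_powerset] at hA
      rw [mem_powersetCard]
      exact ⟨erase_subset_erase x hA.1, by rw [card_erase_of_mem hA.2.1, hA.2.2]⟩
    · intro A hA B hB h
      simp only [mem_filter, mem_powerset] at hA hB
      rw [← insert_erase hA.2.1, ← insert_erase hB.2.1, h]
    · intro B hB
      rw [mem_powersetCard] at hB
      refine ⟨insert x B, ?_, ?_⟩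
      · simp only [mem_filter, mem_powerset]
        refine ⟨insert_subset hx (hB.1.trans (erase_subset x X)), mem_insert_self x B, ?_⟩
        rw [card_insert_of_notMem (fun h => (mem_erase.mp (hB.1 h)).1 rfl), hB.2]
        omega
      · rw [erase_insert (fun h => (mem_erase.mp (hB.1 h)).1 rfl)]
  rw [this, card_powersetCard, card_erase_of_mem hx, hX]

theorem ekr_level {α : Type*} [DecidableEq α] (n : ℕ) (X : Finset α) (hX : X.card = n)
    (i : ℕ) (hin : i ≤ n / 2) (𝒜 : Finset (Finset α))
    (h𝒜X : ∀ A ∈ 𝒜, A ⊆ X) (hsz : ∀ A ∈ 𝒜, A.card = i)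
    (hint : ∀ A ∈ 𝒜, ∀ B ∈ 𝒜, ¬ Disjoint A B) :
    𝒜.card ≤ (n-1).choose (i-1) := by
  have ε : {a // a ∈ X} ≃ Fin n := X.equivFin.trans (finCongr hX)
  set ψ : Finset α → Finset (Fin n) :=
    fun A => Finset.univ.filter (fun j => (ε.symm j : α) ∈ A) with hψ
  have hmem : ∀ (A : Finset α), ∀ a (ha : a ∈ X), (a ∈ A ↔ ε ⟨a, ha⟩ ∈ ψ A) := by
    intro A a ha
    simp [hψ]
  have hcard : ∀ A, A ⊆ X → (ψ A).card = A.card := by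
    intro A hA
    apply Finset.card_bij (fun j _ => (ε.symm j : α))
    · intro j hj; simpa [hψ] using hj
    · intro j1 h1 j2 h2 h
      exact ε.symm.injective (Subtype.ext h)
    · intro a ha
      exact ⟨ε ⟨a, hA ha⟩, (hmem A a (hA ha)).mp ha, by simp⟩
  have hinj : Set.InjOn ψ 𝒜 := by
    intro A hA B hB h
    ext a
    constructor
    · intro haA
      have haX := h𝒜X A hA haA
      have := (hmem A a haX).mp haA
      rw [h] at this
      exact (hmem B a haX).mpr this
    · intro haB
      have haX := h𝒜X B hB haB
      have := (hmem B a haX).mp haB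
      rw [← h] at this
      exact (hmem A a haX).mpr this
  have hcard2 : (𝒜.image ψ).card = 𝒜.card := Finset.card_image_of_injOn hinj
  rw [← hcard2]
  apply Finset.erdos_ko_rado _ _ hin
  · intro u hu v hv hd
    simp only [Finset.coe_image, Set.mem_image, Finset.mem_coe] at hu hv
    obtain ⟨A, hA, rfl⟩ := hu
    obtain ⟨B, hB, rfl⟩ := hv
    apply hint A hA B hB
    rw [Finset.disjoint_left] at hd ⊢
    intro a haA haB
    have haX := h𝒜X A hA haA
    exact hd ((hmem A a haX).mp haA) ((hmem B a haX).mp haB)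
  · intro u hu
    simp only [Finset.coe_image, Set.mem_image, Finset.mem_coe] at hu
    obtain ⟨A, hA, rfl⟩ := hu
    rw [hcard A (h𝒜X A hA)]
    exact hsz A hA

theorem stmt2 {α : Type*} [DecidableEq α] (n k : ℕ) (hk : 1 ≤ k) (hkn : k ≤ n)
    (X : Finset α) (hX : X.card = n) (x : α) (hx : x ∈ X) :
    (∀ F : Finset (Finset α), F ⊆ X.powerset → (∀ A ∈ F, A.card ≤ n - k) →
      (∃ A ∈ F, A.card = n - k) → SimplexFree 1 F →
      F.card ≤ 2 ^ (n - 1) - ∑ j ∈ Finset.Icc 1 (k - 1), (n - 1).choose j) ∧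
    (let G := X.powerset.filter (fun A => x ∈ A ∧ A.card ≤ n - k) ∪ {∅};
      G ⊆ X.powerset ∧ (∀ A ∈ G, A.card ≤ n - k) ∧ (∃ A ∈ G, A.card = n - k) ∧
      SimplexFree 1 G ∧
      G.card = 2 ^ (n - 1) - ∑ j ∈ Finset.Icc 1 (k - 1), (n - 1).choose j) := by
  set s := n - k with hs
  set Gstar := X.powerset.filter (fun A => x ∈ A ∧ A.card ≤ s) with hGstar
  -- cardinality of Gstar
  have hGstar_card : Gstar.card = ∑ i ∈ Finset.range s, (n-1).choose i := by
    have h1 : Gstar.card = ∑ i ∈ Finset.range (s+1), (Gstar.filter (fun A => A.card = i)).card := by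
      apply Finset.card_eq_sum_card_fiberwise
      intro A hA
      rw [hGstar, mem_coe, mem_filter] at hA
      rw [mem_coe, mem_range]
      omega
    have h2 : ∀ i ∈ Finset.range (s+1), (Gstar.filter (fun A => A.card = i)).card
        = if i = 0 then 0 else (n-1).choose (i-1) := by
      intro i hi
      rw [mem_range] at hi
      by_cases h0 : i = 0
      · subst h0
        rw [if_pos rfl, Finset.card_eq_zero, Finset.eq_empty_iff_forall_notMem]
        intro A hA
        simp only [hGstar, mem_filter, mem_powerset] at hA
        have : A.Nonempty := ⟨x, hA.1.2.1⟩
        rw [← Finset.card_pos] at this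
        omega
      · rw [if_neg h0]
        have : Gstar.filter (fun A => A.card = i)
            = X.powerset.filter (fun A => x ∈ A ∧ A.card = i) := by
          ext A
          simp only [hGstar, mem_filter, mem_powerset]
          constructor
          · rintro ⟨⟨hp, hxA, hc⟩, hci⟩
            exact ⟨hp, hxA, hci⟩
          · rintro ⟨hp, hxA, hci⟩
            exact ⟨⟨hp, hxA, by omega⟩, hci⟩
        rw [this, count_level n X hX x hx i (by omega)]
    rw [h1, Finset.sum_congr rfl h2, Finset.sum_range_succ']
    simp
  -- arithmetic: the RHS equals Gstar.card + 1
  have harith : 2 ^ (n - 1) - ∑ j ∈ Finset.Icc 1 (k - 1), (n - 1).choose j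
      = Gstar.card + 1 := by
    have e1 : ∑ j ∈ Finset.range n, (n-1).choose j = 2^(n-1) := by
      have : n = (n-1)+1 := by omega
      rw [this]
      exact Nat.sum_range_choose (n-1)
    have e2 : ∑ j ∈ Finset.Ico 0 k, (n-1).choose j + ∑ j ∈ Finset.Ico k n, (n-1).choose j
        = ∑ j ∈ Finset.Ico 0 n, (n-1).choose j :=
      Finset.sum_Ico_consecutive _ (by omega) (by omega)
    have e3 : ∑ j ∈ Finset.Ico 0 k, (n-1).choose j
        = 1 + ∑ j ∈ Finset.Icc 1 (k-1), (n-1).choose j := by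
      rw [Finset.sum_eq_sum_Ico_succ_bot (by omega : (0:ℕ) < k)]
      have : Finset.Ico 1 k = Finset.Icc 1 (k-1) := by
        rw [← Finset.Ico_add_one_right_eq_Icc]
        congr 1
        omega
      rw [this, Nat.choose_zero_right]
    have e4 : ∑ j ∈ Finset.Ico k n, (n-1).choose j = ∑ i ∈ Finset.range s, (n-1).choose i := by
      rw [Finset.sum_Ico_eq_sum_range]
      have hrw : ∀ i ∈ Finset.range (n-k), (n-1).choose (k+i) = (n-1).choose (s-1-i) := by
        intro i hi
        rw [mem_range] at hi
        have h1 : k + i ≤ n - 1 := by omega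
        have h2 : (n-1) - (k+i) = s - 1 - i := by omega
        rw [← Nat.choose_symm h1, h2]
      rw [Finset.sum_congr rfl hrw, ← hs]
      exact Finset.sum_range_reflect (fun i => (n-1).choose i) s
    rw [Finset.range_eq_Ico] at e1
    rw [hGstar_card]
    omega
  constructor
  · -- upper bound
    intro F hFp hFs _hFe hSF
    have hint : ∀ A ∈ F, ∀ B ∈ F, A.Nonempty → B.Nonempty → ¬ Disjoint A B := by
      intro A hA B hB hAne hBne hd
      apply hSF
      refine ⟨![A, B], ?_, ?_⟩
      · intro i
        fin_cases i <;> simpa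
      · rw [isSimplex_one_iff]
        refine ⟨by simpa using hd, by simpa using hAne, by simpa using hBne⟩
    set F' := F.erase ∅ with hF'
    have hF'F : F' ⊆ F := Finset.erase_subset _ _
    have hF'ne : ∀ A ∈ F', A.Nonempty := by
      intro A hA
      rw [hF', Finset.mem_erase] at hA
      exact Finset.nonempty_iff_ne_empty.mpr hA.1
    have hF'X : ∀ A ∈ F', A ⊆ X := fun A hA => Finset.mem_powerset.mp (hFp (hF'F hA))
    have hF's : ∀ A ∈ F', A.card ≤ s := fun A hA => hFs A (hF'F hA)
    have hsplit : F'.card = (F'.filter (fun A => A.card < k)).card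
        + (F'.filter (fun A => ¬ A.card < k)).card :=
      (Finset.card_filter_add_card_filter_not _).symm
    -- low part
    have hlow : (F'.filter (fun A => A.card < k)).card
        ≤ ∑ i ∈ Finset.range k, (if i = 0 ∨ s < i then 0 else (n-1).choose (i-1)) := by
      have h1 : (F'.filter (fun A => A.card < k)).card
          = ∑ i ∈ Finset.range k,
            ((F'.filter (fun A => A.card < k)).filter (fun A => A.card = i)).card := by
        apply Finset.card_eq_sum_card_fiberwise
        intro A hA
        rw [mem_coe, mem_filter] at hA
        rw [mem_coe, mem_range]
        exact hA.2
      rw [h1]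
      apply Finset.sum_le_sum
      intro i hi
      rw [mem_range] at hi
      by_cases hz : i = 0 ∨ s < i
      · rw [if_pos hz]
        rw [Nat.le_zero, Finset.card_eq_zero, Finset.eq_empty_iff_forall_notMem]
        intro A hA
        simp only [mem_filter] at hA
        have hne := hF'ne A hA.1.1
        have hca := hF's A hA.1.1
        rw [← Finset.card_pos] at hne
        omega
      · rw [if_neg hz]
        push_neg at hz
        apply ekr_level n X hX i (by omega)
        · intro A hA
          simp only [mem_filter] at hA
          exact hF'X A hA.1.1
        · intro A hA
          simp only [mem_filter] at hA
          exact hA.2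
        · intro A hA B hB
          simp only [mem_filter] at hA hB
          apply hint A (hF'F hA.1.1) B (hF'F hB.1.1) (hF'ne A hA.1.1) (hF'ne B hB.1.1)
    -- high part
    set Ghigh := X.powerset.filter (fun A => x ∈ A ∧ A.card ≤ s ∧ k ≤ A.card) with hGhigh
    have hhigh : (F'.filter (fun A => ¬ A.card < k)).card ≤ Ghigh.card := by
      apply Finset.card_le_card_of_injOn (fun A => if x ∈ A then A else X \ A)
      · intro A hA
        simp only [mem_coe, mem_filter] at hA ⊢
        obtain ⟨hA', hAk⟩ := hA
        have hAX := hF'X A hA'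
        have hAs := hF's A hA'
        have hAcn : A.card ≤ n := by
          rw [← hX]; exact Finset.card_le_card hAX
        by_cases hxA : x ∈ A
        · rw [if_pos hxA, hGhigh, mem_filter, mem_powerset]
          exact ⟨hAX, hxA, hAs, by omega⟩
        · rw [if_neg hxA, hGhigh, mem_filter, mem_powerset]
          have hcs : (X \ A).card = n - A.card := by
            rw [Finset.card_sdiff_of_subset hAX, hX]
          refine ⟨Finset.sdiff_subset, Finset.mem_sdiff.mpr ⟨hx, hxA⟩, by omega, by omega⟩
      · intro A hA B hB hAB
        simp only [Finset.coe_filter, Set.mem_setOf_eq] at hA hB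
        obtain ⟨hA', hAk⟩ := hA
        obtain ⟨hB', hBk⟩ := hB
        have hAne := hF'ne A hA'
        have hBne := hF'ne B hB'
        simp only at hAB
        by_cases hxA : x ∈ A <;> by_cases hxB : x ∈ B
        · rwa [if_pos hxA, if_pos hxB] at hAB
        · rw [if_pos hxA, if_neg hxB] at hAB
          exfalso
          apply hint A (hF'F hA') B (hF'F hB') hAne hBne
          rw [hAB]
          exact Finset.sdiff_disjoint
        · rw [if_neg hxA, if_pos hxB] at hAB
          exfalso
          apply hint A (hF'F hA') B (hF'F hB') hAne hBne
          rw [← hAB]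
          exact Finset.disjoint_sdiff
        · rw [if_neg hxA, if_neg hxB] at hAB
          have h1 : X \ (X \ A) = A := by
            rw [sdiff_sdiff_right_self, Finset.inf_eq_inter,
              Finset.inter_eq_right.mpr (hF'X A hA')]
          have h2 : X \ (X \ B) = B := by
            rw [sdiff_sdiff_right_self, Finset.inf_eq_inter,
              Finset.inter_eq_right.mpr (hF'X B hB')]
          rw [← h1, ← h2, hAB]
    have hGhigh_card : Ghigh.card
        = ∑ i ∈ Finset.range (s+1), (if i < k then 0 else (n-1).choose (i-1)) := by
      have h1 : Ghigh.card = ∑ i ∈ Finset.range (s+1), (Ghigh.filter (fun A => A.card = i)).card := by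
        apply Finset.card_eq_sum_card_fiberwise
        intro A hA
        rw [hGhigh, mem_coe, mem_filter] at hA
        rw [mem_coe, mem_range]
        omega
      rw [h1]
      apply Finset.sum_congr rfl
      intro i hi
      rw [mem_range] at hi
      by_cases hik : i < k
      · rw [if_pos hik, Finset.card_eq_zero, Finset.eq_empty_iff_forall_notMem]
        intro A hA
        simp only [hGhigh, mem_filter, mem_powerset] at hA
        omega
      · rw [if_neg hik]
        have : Ghigh.filter (fun A => A.card = i)
            = X.powerset.filter (fun A => x ∈ A ∧ A.card = i) := by
          ext A
          simp only [hGhigh, mem_filter, mem_powerset]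
          constructor
          · rintro ⟨⟨hp, hxA, _, _⟩, hci⟩
            exact ⟨hp, hxA, hci⟩
          · rintro ⟨hp, hxA, hci⟩
            exact ⟨⟨hp, hxA, by omega, by omega⟩, hci⟩
        rw [this, count_level n X hX x hx i (by omega)]
    -- combine sums
    have hsums : ∑ i ∈ Finset.range k, (if i = 0 ∨ s < i then 0 else (n-1).choose (i-1))
        + ∑ i ∈ Finset.range (s+1), (if i < k then 0 else (n-1).choose (i-1))
        ≤ Gstar.card := by
      rw [hGstar_card]
      set M := max k (s+1) with hM
      have hA1 : ∑ i ∈ Finset.range k, (if i = 0 ∨ s < i then 0 else (n-1).choose (i-1))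
          = ∑ i ∈ Finset.range M, (if i = 0 ∨ s < i ∨ k ≤ i then 0 else (n-1).choose (i-1)) := by
        have step1 : ∑ i ∈ Finset.range k, (if i = 0 ∨ s < i then 0 else (n-1).choose (i-1))
            = ∑ i ∈ Finset.range k, (if i = 0 ∨ s < i ∨ k ≤ i then 0 else (n-1).choose (i-1)) := by
          apply Finset.sum_congr rfl
          intro i hi
          rw [mem_range] at hi
          congr 1
          simp only [eq_iff_iff]
          omega
        rw [step1]
        apply Finset.sum_subset (Finset.range_subset_range.mpr (le_max_left k (s+1)))
        intro i _ hik
        rw [mem_range, not_lt] at hik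
        rw [if_pos (by omega)]
      have hA2 : ∑ i ∈ Finset.range (s+1), (if i < k then 0 else (n-1).choose (i-1))
          = ∑ i ∈ Finset.range M, (if i < k ∨ s < i then 0 else (n-1).choose (i-1)) := by
        have step1 : ∑ i ∈ Finset.range (s+1), (if i < k then 0 else (n-1).choose (i-1))
            = ∑ i ∈ Finset.range (s+1), (if i < k ∨ s < i then 0 else (n-1).choose (i-1)) := by
          apply Finset.sum_congr rfl
          intro i hi
          rw [mem_range] at hi
          congr 1
          simp only [eq_iff_iff]
          omega
        rw [step1]
        apply Finset.sum_subset (Finset.range_subset_range.mpr (le_max_right k (s+1)))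
        intro i _ his
        rw [mem_range, not_lt] at his
        rw [if_pos (by omega)]
      have hA3 : ∑ i ∈ Finset.range M, (if i = 0 ∨ s < i then 0 else (n-1).choose (i-1))
          = ∑ i ∈ Finset.range s, (n-1).choose i := by
        have h0 : ∑ i ∈ Finset.range (s+1), (if i = 0 ∨ s < i then 0 else (n-1).choose (i-1))
            = ∑ i ∈ Finset.range s, (n-1).choose i := by
          rw [Finset.sum_range_succ']
          rw [if_pos (Or.inl rfl), Nat.add_zero]
          apply Finset.sum_congr rfl
          intro i hi
          rw [mem_range] at hi
          rw [if_neg (by omega)]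
          simp
        rw [← h0]
        symm
        apply Finset.sum_subset (Finset.range_subset_range.mpr (by omega : s+1 ≤ M))
        intro i _ his
        rw [mem_range, not_lt] at his
        rw [if_pos (by omega)]
      rw [hA1, hA2, ← hA3, ← Finset.sum_add_distrib]
      apply Finset.sum_le_sum
      intro i _
      split_ifs <;> omega
    -- conclude upper bound
    have hFF' : F.card ≤ F'.card + 1 := by
      have : F ⊆ insert ∅ F' := by
        rw [hF']
        intro A hA
        by_cases hA0 : A = ∅
        · rw [hA0]; exact Finset.mem_insert_self _ _
        · exact Finset.mem_insert_of_mem (Finset.mem_erase.mpr ⟨hA0, hA⟩)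
      calc F.card ≤ (insert ∅ F').card := Finset.card_le_card this
        _ ≤ F'.card + 1 := Finset.card_insert_le _ _
    rw [harith]
    omega

  · -- the extremal family
    intro G
    have hG : G = Gstar ∪ {∅} := rfl
    have hkey : ∀ B, B ∈ Gstar ∪ {∅} → B.Nonempty → (x ∈ B ∧ B.card ≤ s) := by
      intro B hB hBne
      rcases Finset.mem_union.mp hB with h | h
      · rw [hGstar, mem_filter] at h
        exact ⟨h.2.1, h.2.2⟩
      · rw [Finset.mem_singleton] at h
        exact absurd h (Finset.nonempty_iff_ne_empty.mp hBne)
    refine ⟨?_, ?_, ?_, ?_, ?_⟩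
    · rw [hG]
      apply Finset.union_subset
      · exact (Finset.filter_subset _ _).trans (Finset.Subset.refl _)
      · rw [Finset.singleton_subset_iff]
        exact Finset.empty_mem_powerset X
    · intro A hA
      rw [hG] at hA
      rcases Finset.mem_union.mp hA with h | h
      · rw [hGstar, mem_filter] at h
        exact h.2.2
      · rw [Finset.mem_singleton] at h
        rw [h, Finset.card_empty]
        exact Nat.zero_le _
    · by_cases hs0 : s = 0
      · refine ⟨∅, ?_, by rw [Finset.card_empty, hs0]⟩
        rw [hG]
        exact Finset.mem_union_right _ (Finset.mem_singleton_self _)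
      · obtain ⟨A, hxA, hAX, hAc⟩ := Finset.exists_subsuperset_card_eq
          (Finset.singleton_subset_iff.mpr hx) (by simp; omega) (by rw [hX]; omega : s ≤ X.card)
        refine ⟨A, ?_, hAc⟩
        rw [hG]
        apply Finset.mem_union_left
        rw [hGstar, mem_filter, mem_powerset]
        exact ⟨hAX, hxA (Finset.mem_singleton_self x), le_of_eq hAc⟩
    · rintro ⟨A, hmem, hsimp⟩
      rw [isSimplex_one_iff] at hsimp
      obtain ⟨hd, h0, h1⟩ := hsimp
      have k0 := hkey (A 0) (by rw [← hG]; exact hmem 0) h0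
      have k1 := hkey (A 1) (by rw [← hG]; exact hmem 1) h1
      exact Finset.disjoint_left.mp hd k0.1 k1.1
    · rw [hG, harith]
      have hnot : ∅ ∉ Gstar := by
        rw [hGstar, mem_filter]
        rintro ⟨-, h, -⟩
        exact Finset.notMem_empty x h
      rw [Finset.card_union_of_disjoint (Finset.disjoint_singleton_right.mpr hnot),
        Finset.card_singleton]
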